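/- In the five-point example with the parametrized stochastic attack family p^α_{Z|X} (α ∈ [0,1]) where Z=1 if X=0, Z=3 if X=4, and Z=1 with probability α or Z=3 with probability 1−α if X=2, the resulting conditional entropy H(Y|Z) is maximized at α = 1/2, with maximum value h₂(1/3). -/

import Mathlib

open scoped BigOperators

/-- Joint law of `(Y, Z)` under the parametrized stochastic attack `p^α_{Z|X}` in the
five-point example: `P_{X,Y}` uniform on `{(0,0),(2,2),(4,4)}`, `Z = 1` if `X = 0`,
`Z = 3` if `X = 4`, and if `X = 2` then `Z = 1` w.p. `α`, `Z = 3` w.p. `1−α`. -/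
noncomputable def jointAlpha (α : ℝ) : Fin 5 × Fin 5 → ℝ := fun a =>
  if a = (0, 1) then 1/3
  else if a = (2, 1) then α/3
  else if a = (2, 3) then (1 - α)/3
  else if a = (4, 3) then 1/3
  else 0

/-- Conditional entropy `H(Y|Z)` of a joint law on `Fin 5 × Fin 5`
(first coordinate `Y`, second `Z`). -/
noncomputable def condEntYZ (j : Fin 5 × Fin 5 → ℝ) : ℝ :=
  -∑ a, j a * Real.log (j a / ∑ y, j (y, a.2))

/-- Binary entropy function (natural log). -/
noncomputable def h2 (p : ℝ) : ℝ := -p * Real.log p - (1 - p) * Real.log (1 - p)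

/-- auxiliary function -/
noncomputable def gAux (x : ℝ) : ℝ := (1 + x) * Real.log (1 + x) - x * Real.log x

lemma gAux_hasDerivAt {x : ℝ} (hx : 0 < x) :
    HasDerivAt gAux (Real.log (1 + x) - Real.log x) x := by
  have h1 : HasDerivAt (fun y : ℝ => (1 + y) * Real.log (1 + y))
      (Real.log (1 + x) + 1) x := by
    have ha : HasDerivAt (fun y : ℝ => 1 + y) 1 x := (hasDerivAt_id x).const_add 1
    have hb : HasDerivAt Real.log (1+x)⁻¹ (1 + x) := Real.hasDerivAt_log (by linarith)
    have h := ha.mul (hb.comp x ha)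
    refine h.congr_deriv ?_
    simp only [Function.comp_apply, mul_one, mul_inv_cancel₀ (by linarith : (1:ℝ) + x ≠ 0)]
    ring
  have h2 : HasDerivAt (fun y : ℝ => y * Real.log y) (Real.log x + 1) x := by
    have h := (hasDerivAt_id x).mul (Real.hasDerivAt_log hx.ne')
    refine h.congr_deriv ?_
    simp only [id, mul_inv_cancel₀ hx.ne']
    ring
  have := h1.sub h2
  refine this.congr_deriv ?_
  ring

lemma gAux_concave : ConcaveOn ℝ (Set.Icc (0:ℝ) 1) gAux := by
  have hint : interior (Set.Icc (0:ℝ) 1) = Set.Ioo 0 1 := interior_Icc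
  have hderiv : ∀ x ∈ Set.Ioo (0:ℝ) 1, deriv gAux x = Real.log (1 + x) - Real.log x :=
    fun x hx => (gAux_hasDerivAt hx.1).deriv
  refine AntitoneOn.concaveOn_of_deriv (convex_Icc 0 1) ?_ ?_ ?_
  · have : Continuous gAux := by
      have := Real.continuous_mul_log
      exact ((this.comp (continuous_const.add continuous_id)).sub this)
    exact this.continuousOn
  · rw [hint]
    intro x hx
    exact (gAux_hasDerivAt hx.1).differentiableAt.differentiableWithinAt
  · rw [hint]
    intro x hx y hy hxy
    rw [hderiv x hx, hderiv y hy]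
    have h1 : Real.log (1 + y) + Real.log x ≤ Real.log (1 + x) + Real.log y := by
      rw [← Real.log_mul (by linarith [hy.1]) (ne_of_gt hx.1),
          ← Real.log_mul (by linarith [hx.1]) (ne_of_gt hy.1)]
      apply Real.log_le_log (by nlinarith [hy.1, hx.1])
      nlinarith [hx.1, hy.1]
    linarith

lemma mul_log_div_expand (a b : ℝ) (hb : b ≠ 0) :
    a * Real.log (a / b) = a * Real.log a - a * Real.log b := by
  rcases eq_or_ne a 0 with rfl | ha
  · simp
  · rw [Real.log_div ha hb]; ring

lemma key (α : ℝ) (h0 : 0 ≤ α) (h1 : α ≤ 1) :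
    condEntYZ (jointAlpha α) = (gAux α + gAux (1 - α)) / 3 := by
  have ha : (0:ℝ) < 1 + α := by linarith
  have hb : (0:ℝ) < 2 - α := by linarith
  rw [condEntYZ, Fintype.sum_prod_type]
  simp (config := { decide := true }) only [Fin.sum_univ_five, jointAlpha, Prod.mk.injEq,
    if_true, if_false, and_true, and_false, true_and, false_and]
  norm_num
  have e1 : (1:ℝ)/3 / ((1-α)/3 + 1/3) = 1/(2-α) := by
    rw [div_eq_div_iff (by linarith) hb.ne']; ring
  have e2 : ((1-α)/3) / ((1-α)/3 + 1/3) = (1-α)/(2-α) := by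
    rw [div_eq_div_iff (by linarith) hb.ne']; ring
  have e3 : (α/3) / (1/3 + α/3) = α/(1+α) := by
    rw [div_eq_div_iff (by linarith) ha.ne']; ring
  have e4 : (1:ℝ)/3 / (1/3 + α/3) = 1/(1+α) := by
    rw [div_eq_div_iff (by linarith) ha.ne']; ring
  rw [e1, e2, e3, e4]
  have f1 : Real.log (1/(2-α)) = -Real.log (2-α) := by rw [one_div, Real.log_inv]
  have f4 : Real.log (1/(1+α)) = -Real.log (1+α) := by rw [one_div, Real.log_inv]
  have f2 : (1-α)/3 * Real.log ((1-α)/(2-α))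
      = ((1-α) * Real.log (1-α) - (1-α) * Real.log (2-α))/3 := by
    rw [div_mul_eq_mul_div, mul_log_div_expand _ _ hb.ne']
  have f3 : α/3 * Real.log (α/(1+α))
      = (α * Real.log α - α * Real.log (1+α))/3 := by
    rw [div_mul_eq_mul_div, mul_log_div_expand _ _ ha.ne']
  rw [f1, f2, f3, f4, gAux, gAux]
  ring_nf

lemma gAux_half : gAux (1/2) = (3/2) * Real.log 3 - Real.log 2 := by
  rw [gAux, show (1:ℝ) + 1/2 = 3/2 by norm_num,
    Real.log_div (by norm_num) (by norm_num), one_div, Real.log_inv]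
  ring

/-- over the family `p^α`, `α ∈ [0,1]`, the conditional entropy `H(Y|Z)`
is maximized at `α = 1/2`, with maximum value `h₂(1/3)`. -/
theorem alpha_half_maximizes_condEnt :
    (∀ α ∈ Set.Icc (0 : ℝ) 1, condEntYZ (jointAlpha α) ≤ condEntYZ (jointAlpha (1/2))) ∧
    condEntYZ (jointAlpha (1/2)) = h2 (1/3) := by
  have hhalf : condEntYZ (jointAlpha (1/2)) = 2 * gAux (1/2) / 3 := by
    rw [key (1/2) (by norm_num) (by norm_num)]
    norm_num
    ring
  constructor
  · intro α hα
    rw [key α hα.1 hα.2, hhalf]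
    have hmem1 : α ∈ Set.Icc (0:ℝ) 1 := hα
    have hmem2 : (1 - α) ∈ Set.Icc (0:ℝ) 1 := ⟨by linarith [hα.2], by linarith [hα.1]⟩
    have h := gAux_concave.2 hmem1 hmem2 (by norm_num : (0:ℝ) ≤ 1/2)
      (by norm_num : (0:ℝ) ≤ 1/2) (by norm_num)
    simp only [smul_eq_mul] at h
    rw [show (1:ℝ)/2 * α + 1/2 * (1 - α) = 1/2 by ring] at h
    linarith
  · rw [hhalf, gAux_half, h2, show (1:ℝ) - 1/3 = 2/3 by norm_num, one_div,
      Real.log_inv, Real.log_div (by norm_num) (by norm_num)]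
    ring
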